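/- Let A ∈ ℝ^{n×n} and let u, v ∈ ℝ^n be nonzero vectors satisfying ⟨u,v⟩ = ⟨Au,v⟩ = ⟨u,Av⟩ = ⟨Au,Av⟩ = 0. Suppose t, r ∈ ℝ are such that both z_A(u) and z_A(v) lie on the circle of radius r centered at (t,0), i.e. (Re z_A(u) − t)² + (Im z_A(u))² = r² and likewise for v. Then for all α₁, α₂ ∈ ℝ with w = α₁u + α₂v ≠ 0, the point z_A(w) also lies on this circle: (Re z_A(w) − t)² + (Im z_A(w))² = r². -/

import Mathlib

open Matrix
open scoped RealInnerProductSpace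

noncomputable def mulVecE {ι : Type*} [Fintype ι] (A : Matrix ι ι ℝ)
    (x : EuclideanSpace ℝ ι) : EuclideanSpace ℝ ι := WithLp.toLp 2 (A.mulVec x)

open Classical in
noncomputable def ang {ι : Type*} [Fintype ι] (a b : EuclideanSpace ℝ ι) : ℝ :=
  if a = 0 ∨ b = 0 then 0 else Real.arccos (⟪a, b⟫ / (‖a‖ * ‖b‖))

noncomputable def zA {ι : Type*} [Fintype ι] (A : Matrix ι ι ℝ)
    (x : EuclideanSpace ℝ ι) : ℂ :=
  ((‖mulVecE A x‖ / ‖x‖ : ℝ) : ℂ) * Complex.exp (Complex.I * (ang (mulVecE A x) x : ℝ))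

noncomputable def SRG {ι : Type*} [Fintype ι] (A : Matrix ι ι ℝ) : Set ℂ :=
  {z | ∃ x : EuclideanSpace ℝ ι, x ≠ 0 ∧ (z = zA A x ∨ z = (starRingEnd ℂ) (zA A x))}

lemma zA_circ {ι : Type*} [Fintype ι] (A : Matrix ι ι ℝ) (x : EuclideanSpace ℝ ι)
    (hx : x ≠ 0) (t : ℝ) :
    ((zA A x).re - t) ^ 2 + ((zA A x).im) ^ 2
      = (‖mulVecE A x‖ ^ 2 - 2 * t * ⟪mulVecE A x, x⟫) / ‖x‖ ^ 2 + t ^ 2 := by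
  set c : ℝ := ‖mulVecE A x‖ / ‖x‖ with hc
  set θ : ℝ := ang (mulVecE A x) x with hθ
  have hz : zA A x = (c : ℂ) * Complex.exp ((θ : ℂ) * Complex.I) := by
    rw [zA, mul_comm Complex.I]
  have hre : (zA A x).re = c * Real.cos θ := by
    rw [hz, Complex.exp_mul_I]
    simp [Complex.cos_ofReal_re, Complex.sin_ofReal_re]
  have him : (zA A x).im = c * Real.sin θ := by
    rw [hz, Complex.exp_mul_I]
    simp [Complex.cos_ofReal_im, Complex.sin_ofReal_re]
  have hxn : ‖x‖ ≠ 0 := norm_ne_zero_iff.mpr hx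
  have hcc : c * Real.cos θ = ⟪mulVecE A x, x⟫ / ‖x‖ ^ 2 := by
    by_cases hAx : mulVecE A x = 0
    · simp [hc, hAx, inner_zero_left]
    · have hθ' : θ = Real.arccos (⟪mulVecE A x, x⟫ / (‖mulVecE A x‖ * ‖x‖)) := by
        rw [hθ, ang, if_neg (by tauto)]
      have hb := abs_real_inner_div_norm_mul_norm_le_one (mulVecE A x) x
      rw [hθ', Real.cos_arccos (by linarith [abs_le.mp hb|>.1]) (by linarith [abs_le.mp hb|>.2])]
      have hAn : ‖mulVecE A x‖ ≠ 0 := norm_ne_zero_iff.mpr hAx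
      field_simp [hc]
      rw [hc, div_mul_eq_mul_div, div_mul_eq_mul_div, mul_div_assoc, div_self hxn, mul_one, mul_comm]
  have hc2 : c ^ 2 = ‖mulVecE A x‖ ^ 2 / ‖x‖ ^ 2 := by
    rw [hc]; field_simp
  have hpyth := Real.sin_sq_add_cos_sq θ
  rw [hre, him]
  have : (c * Real.cos θ - t) ^ 2 + (c * Real.sin θ) ^ 2
      = c ^ 2 - 2 * t * (c * Real.cos θ) + t ^ 2 := by nlinarith [hpyth]
  rw [this, hc2, hcc]; ring

theorem stmt6 {n : ℕ} (A : Matrix (Fin n) (Fin n) ℝ) (u v : EuclideanSpace ℝ (Fin n))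
    (hu : u ≠ 0) (hv : v ≠ 0) (h1 : ⟪u, v⟫ = 0) (h2 : ⟪mulVecE A u, v⟫ = 0)
    (h3 : ⟪u, mulVecE A v⟫ = 0) (h4 : ⟪mulVecE A u, mulVecE A v⟫ = 0) (t r : ℝ)
    (hcu : ((zA A u).re - t) ^ 2 + ((zA A u).im) ^ 2 = r ^ 2)
    (hcv : ((zA A v).re - t) ^ 2 + ((zA A v).im) ^ 2 = r ^ 2)
    (α₁ α₂ : ℝ) (hw : α₁ • u + α₂ • v ≠ 0) :
    ((zA A (α₁ • u + α₂ • v)).re - t) ^ 2 + ((zA A (α₁ • u + α₂ • v)).im) ^ 2 = r ^ 2 := by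
  set w := α₁ • u + α₂ • v with hwdef
  have hAw : mulVecE A w = α₁ • mulVecE A u + α₂ • mulVecE A v := by
    simp only [hwdef, mulVecE, WithLp.ofLp_add, WithLp.ofLp_smul, Matrix.mulVec_add,
      Matrix.mulVec_smul, WithLp.toLp_add, WithLp.toLp_smul]
  have h1' : ⟪v, u⟫ = 0 := by rw [real_inner_comm]; exact h1
  have h2' : ⟪v, mulVecE A u⟫ = 0 := by rw [real_inner_comm]; exact h2
  have h3' : ⟪mulVecE A v, u⟫ = 0 := by rw [real_inner_comm]; exact h3
  have h4' : ⟪mulVecE A v, mulVecE A u⟫ = 0 := by rw [real_inner_comm]; exact h4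
  have hw2 : ‖w‖ ^ 2 = α₁ ^ 2 * ‖u‖ ^ 2 + α₂ ^ 2 * ‖v‖ ^ 2 := by
    rw [← real_inner_self_eq_norm_sq, ← real_inner_self_eq_norm_sq,
      ← real_inner_self_eq_norm_sq, hwdef]
    simp only [inner_add_left, inner_add_right, real_inner_smul_left, real_inner_smul_right,
      h1, h1', mul_zero, add_zero, zero_add]
    ring
  have hAw2 : ‖mulVecE A w‖ ^ 2 = α₁ ^ 2 * ‖mulVecE A u‖ ^ 2 + α₂ ^ 2 * ‖mulVecE A v‖ ^ 2 := by
    rw [← real_inner_self_eq_norm_sq, ← real_inner_self_eq_norm_sq,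
      ← real_inner_self_eq_norm_sq, hAw]
    simp only [inner_add_left, inner_add_right, real_inner_smul_left, real_inner_smul_right,
      h4, h4', mul_zero, add_zero, zero_add]
    ring
  have hmix : ⟪mulVecE A w, w⟫ = α₁ ^ 2 * ⟪mulVecE A u, u⟫ + α₂ ^ 2 * ⟪mulVecE A v, v⟫ := by
    rw [hAw, hwdef]
    simp only [inner_add_left, inner_add_right, real_inner_smul_left, real_inner_smul_right,
      h2, h3, h2', h3', mul_zero, add_zero, zero_add]
    ring
  have hun : ‖u‖ ≠ 0 := norm_ne_zero_iff.mpr hu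
  have hvn : ‖v‖ ≠ 0 := norm_ne_zero_iff.mpr hv
  have hwn : ‖w‖ ≠ 0 := norm_ne_zero_iff.mpr hw
  rw [zA_circ A u hu t] at hcu
  rw [zA_circ A v hv t] at hcv
  rw [zA_circ A w hw t]
  have hcu' : ‖mulVecE A u‖ ^ 2 - 2 * t * ⟪mulVecE A u, u⟫ = (r ^ 2 - t ^ 2) * ‖u‖ ^ 2 := by
    have : (‖mulVecE A u‖ ^ 2 - 2 * t * ⟪mulVecE A u, u⟫) / ‖u‖ ^ 2 = r ^ 2 - t ^ 2 := by
      linarith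
    exact (div_eq_iff (pow_ne_zero 2 hun)).mp this
  have hcv' : ‖mulVecE A v‖ ^ 2 - 2 * t * ⟪mulVecE A v, v⟫ = (r ^ 2 - t ^ 2) * ‖v‖ ^ 2 := by
    have : (‖mulVecE A v‖ ^ 2 - 2 * t * ⟪mulVecE A v, v⟫) / ‖v‖ ^ 2 = r ^ 2 - t ^ 2 := by
      linarith
    exact (div_eq_iff (pow_ne_zero 2 hvn)).mp this
  have hnum : ‖mulVecE A w‖ ^ 2 - 2 * t * ⟪mulVecE A w, w⟫ = (r ^ 2 - t ^ 2) * ‖w‖ ^ 2 := by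
    rw [hAw2, hmix, hw2]; nlinarith [hcu', hcv']
  rw [hnum]
  field_simp
  ring
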